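/- The partial derivative of the call price C with respect to the interest rate r (the Rho) equals (T-t)Ke^{-r(T-t)}Φ(d_{t,2}^α) + (αt/σ)e^{rt}(Φ(d_{t,1}^α) - Φ(d_{t,2}^α)). -/

import Mathlib

open Real

/-- Standard normal CDF. -/
noncomputable def Phi (d : ℝ) : ℝ :=
  ∫ u in Set.Iic d, Real.exp (-u ^ 2 / 2) / Real.sqrt (2 * Real.pi)

/-- d_{t,1}^α of the crisis model. -/
noncomputable def d1 (s K σ α r t T : ℝ) : ℝ :=
  (Real.log ((s + α / σ * Real.exp (r * t)) / (K + α / σ * Real.exp (r * T)))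
    + (r + σ ^ 2 / 2) * (T - t)) / (σ * Real.sqrt (T - t))

/-- d_{t,2}^α of the crisis model. -/
noncomputable def d2 (s K σ α r t T : ℝ) : ℝ :=
  d1 s K σ α r t T - σ * Real.sqrt (T - t)

/-- Crisis-model European call price. -/
noncomputable def C (s K σ α r t T : ℝ) : ℝ :=
  (s + α / σ * Real.exp (r * t)) * Phi (d1 s K σ α r t T)
    - (K * Real.exp (-r * (T - t)) + α / σ * Real.exp (r * t)) * Phi (d2 s K σ α r t T)

open MeasureTheory in
lemma gauss_integrable : Integrable (fun u : ℝ => Real.exp (-u ^ 2 / 2) / Real.sqrt (2 * Real.pi)) := by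
  have h := integrable_exp_neg_mul_sq (by norm_num : (0:ℝ) < 1/2)
  have h2 : (fun u : ℝ => Real.exp (-u ^ 2 / 2)) = fun u : ℝ => Real.exp (-(1/2) * u ^ 2) := by
    ext u; ring_nf
  exact (h2 ▸ h).div_const _

open MeasureTheory in
lemma hasDerivAt_Phi (d : ℝ) :
    HasDerivAt Phi (Real.exp (-d ^ 2 / 2) / Real.sqrt (2 * Real.pi)) d := by
  set f : ℝ → ℝ := fun u => Real.exp (-u ^ 2 / 2) / Real.sqrt (2 * Real.pi) with hf
  have hcont : Continuous f := by continuity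
  have key : ∀ x, Phi x = Phi d + ∫ u in d..x, f u := by
    intro x
    have := intervalIntegral.integral_Iic_sub_Iic (μ := volume) (f := f)
      gauss_integrable.integrableOn gauss_integrable.integrableOn (a := d) (b := x)
    simp only [Phi, hf] at this ⊢
    linarith
  have h := intervalIntegral.integral_hasDerivAt_right
    (gauss_integrable.intervalIntegrable)
    (hcont.aestronglyMeasurable.stronglyMeasurableAtFilter)
    (hcont.continuousAt) (a := d) (b := d)
  have := (h.const_add (Phi d)).congr_of_eventuallyEq
    (Filter.Eventually.of_forall fun x => (key x))
  simpa using this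


/-- Rho of the crisis-model call. -/
theorem crisis_rho (s K σ α r t T : ℝ)
    (hs : 0 < s) (hK : 0 < K) (hσ : 0 < σ) (hα : 0 ≤ α)
    (ht : 0 ≤ t) (htT : t < T)
    (h1 : 0 < s + α / σ * Real.exp (r * t))
    (h2 : 0 < K + α / σ * Real.exp (r * T)) :
    HasDerivAt (fun ρ => C s K σ α ρ t T)
      ((T - t) * K * Real.exp (-r * (T - t)) * Phi (d2 s K σ α r t T)
        + α * t / σ * Real.exp (r * t) *
          (Phi (d1 s K σ α r t T) - Phi (d2 s K σ α r t T))) r := by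
  have hτ : 0 < T - t := by linarith
  have hsqrt : 0 < Real.sqrt (T - t) := Real.sqrt_pos.2 hτ
  have hc : 0 < σ * Real.sqrt (T - t) := mul_pos hσ hsqrt
  set Av : ℝ := s + α / σ * Real.exp (r * t) with hAv
  set Kv : ℝ := K + α / σ * Real.exp (r * T) with hKv
  set Bv : ℝ := K * Real.exp (-r * (T - t)) + α / σ * Real.exp (r * t) with hBv
  set d1v : ℝ := d1 s K σ α r t T with hd1v
  set d2v : ℝ := d2 s K σ α r t T with hd2v
  -- elementary derivatives
  have hE_t : HasDerivAt (fun ρ : ℝ => Real.exp (ρ * t)) (Real.exp (r * t) * t) r := by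
    simpa using ((hasDerivAt_id r).mul_const t).exp
  have hE_T : HasDerivAt (fun ρ : ℝ => Real.exp (ρ * T)) (Real.exp (r * T) * T) r := by
    simpa using ((hasDerivAt_id r).mul_const T).exp
  have hE_neg : HasDerivAt (fun ρ : ℝ => Real.exp (-ρ * (T - t)))
      (Real.exp (-r * (T - t)) * (-1 * (T - t))) r := by
    simpa using (((hasDerivAt_id r).neg).mul_const (T - t)).exp
  have hA : HasDerivAt (fun ρ : ℝ => s + α / σ * Real.exp (ρ * t))
      (α / σ * (Real.exp (r * t) * t)) r := (hE_t.const_mul (α / σ)).const_add s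
  have hKd : HasDerivAt (fun ρ : ℝ => K + α / σ * Real.exp (ρ * T))
      (α / σ * (Real.exp (r * T) * T)) r := (hE_T.const_mul (α / σ)).const_add K
  have hB : HasDerivAt (fun ρ : ℝ => K * Real.exp (-ρ * (T - t)) + α / σ * Real.exp (ρ * t))
      (K * (Real.exp (-r * (T - t)) * (-1 * (T - t))) + α / σ * (Real.exp (r * t) * t)) r :=
    (hE_neg.const_mul K).add (hE_t.const_mul (α / σ))
  have hQ := hA.div hKd (ne_of_gt h2)
  have hQpos : 0 < Av / Kv := div_pos h1 h2
  have hlog := hQ.log (ne_of_gt hQpos)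
  have hlin : HasDerivAt (fun ρ : ℝ => (ρ + σ ^ 2 / 2) * (T - t)) (1 * (T - t)) r :=
    ((hasDerivAt_id r).add_const _).mul_const (T - t)
  set D1 : ℝ := ((α / σ * (Real.exp (r * t) * t) * Kv - Av * (α / σ * (Real.exp (r * T) * T))) /
      Kv ^ 2 / (Av / Kv) + 1 * (T - t)) / (σ * Real.sqrt (T - t)) with hD1def
  have hd1 : HasDerivAt (fun ρ : ℝ => d1 s K σ α ρ t T) D1 r := by
    simp only [d1]
    exact (hlog.add hlin).div_const _
  have hd2 : HasDerivAt (fun ρ : ℝ => d2 s K σ α ρ t T) D1 r := by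
    simp only [d2]
    exact hd1.sub_const _
  have hΦ1 : HasDerivAt (fun ρ : ℝ => Phi (d1 s K σ α ρ t T))
      (Real.exp (-d1v ^ 2 / 2) / Real.sqrt (2 * Real.pi) * D1) r :=
    by have := (hasDerivAt_Phi d1v).comp r hd1; exact this
  have hΦ2 : HasDerivAt (fun ρ : ℝ => Phi (d2 s K σ α ρ t T))
      (Real.exp (-d2v ^ 2 / 2) / Real.sqrt (2 * Real.pi) * D1) r :=
    by have := (hasDerivAt_Phi d2v).comp r hd2; exact this
  -- key identity : Av * φ(d1) = Bv * φ(d2)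
  have hBK : Bv = Kv * Real.exp (-r * (T - t)) := by
    have he : Real.exp (r * T) * Real.exp (-r * (T - t)) = Real.exp (r * t) := by
      rw [← Real.exp_add]; congr 1; ring
    rw [hBv, hKv, add_mul, mul_assoc, he]
  have hd1c : d1v * (σ * Real.sqrt (T - t)) =
      Real.log (Av / Kv) + (r + σ ^ 2 / 2) * (T - t) := by
    rw [hd1v, d1, div_mul_cancel₀ _ (ne_of_gt hc)]
  have hsq : Real.sqrt (T - t) ^ 2 = T - t := Real.sq_sqrt (le_of_lt hτ)
  have hne : Real.exp (-r * (T - t)) * Real.exp (r * (T - t)) = 1 := by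
    rw [← Real.exp_add]; ring_nf; exact Real.exp_zero
  have hkey : Av * Real.exp (-d1v ^ 2 / 2) = Bv * Real.exp (-d2v ^ 2 / 2) := by
    have hexp : Real.exp (-d2v ^ 2 / 2) =
        Real.exp (-d1v ^ 2 / 2) * (Av / Kv) * Real.exp (r * (T - t)) := by
      have h3 : -d2v ^ 2 / 2 = -d1v ^ 2 / 2 + Real.log (Av / Kv) + r * (T - t) := by
        have hexpand : -d2v ^ 2 / 2 = -d1v ^ 2 / 2 + d1v * (σ * Real.sqrt (T - t))
            - (σ * Real.sqrt (T - t)) ^ 2 / 2 := by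
          rw [hd2v, d2, ← hd1v]; ring
        rw [hexpand, hd1c, mul_pow, hsq]; ring
      rw [h3, Real.exp_add, Real.exp_add, Real.exp_log hQpos]
    have h4 : Kv * Real.exp (-r * (T - t)) *
        (Real.exp (-d1v ^ 2 / 2) * (Av / Kv) * Real.exp (r * (T - t))) =
        (Real.exp (-r * (T - t)) * Real.exp (r * (T - t))) * (Av / Kv * Kv) *
          Real.exp (-d1v ^ 2 / 2) := by ring
    rw [hexp, hBK, h4, hne, div_mul_cancel₀ _ (ne_of_gt h2), one_mul]
  have hkey' : Av * (Real.exp (-d1v ^ 2 / 2) / Real.sqrt (2 * Real.pi)) =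
      Bv * (Real.exp (-d2v ^ 2 / 2) / Real.sqrt (2 * Real.pi)) := by
    rw [← mul_div_assoc, ← mul_div_assoc, hkey]
  -- assemble
  have hC' : HasDerivAt (fun ρ => C s K σ α ρ t T)
      (α / σ * (Real.exp (r * t) * t) * Phi d1v
        + Av * (Real.exp (-d1v ^ 2 / 2) / Real.sqrt (2 * Real.pi) * D1)
        - ((K * (Real.exp (-r * (T - t)) * (-1 * (T - t))) + α / σ * (Real.exp (r * t) * t))
            * Phi d2v
          + Bv * (Real.exp (-d2v ^ 2 / 2) / Real.sqrt (2 * Real.pi) * D1))) r := by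
    have h := (hA.mul hΦ1).sub (hB.mul hΦ2)
    simp only [C]
    exact h
  clear_value Av Kv Bv d1v d2v D1
  have heq : (T - t) * K * Real.exp (-r * (T - t)) * Phi d2v
        + α * t / σ * Real.exp (r * t) * (Phi d1v - Phi d2v)
      = α / σ * (Real.exp (r * t) * t) * Phi d1v
        + Av * (Real.exp (-d1v ^ 2 / 2) / Real.sqrt (2 * Real.pi) * D1)
        - ((K * (Real.exp (-r * (T - t)) * (-1 * (T - t))) + α / σ * (Real.exp (r * t) * t))
            * Phi d2v
          + Bv * (Real.exp (-d2v ^ 2 / 2) / Real.sqrt (2 * Real.pi) * D1)) := by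
    linear_combination -D1 * hkey'
  rw [heq]
  exact hC'
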